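/- Under the conjugation action of the n-qubit CNOT group cX = ⟨Λ_{ij}(X)⟩ on the Pauli group P/⟨i⟩ (n ≥ 2), there are exactly 5 orbits, with representatives I, X(1), Z(1), Y(1), Y(1)Y(2), of sizes 1, 2^n−1, 2^n−1, 2^{n−1}(2^n−1), and 4^n/2 − 3·2^{n−1} + 1 respectively. -/

import Mathlib

open scoped Matrix

/-- The action of `B ∈ GL_n(𝔽₂)` on the Pauli group mod phases, identified
with pairs `(u,v) ∈ 𝔽₂ⁿ × 𝔽₂ⁿ` via `X(u)Z(v)`: `(u,v) ↦ (Bu, (Bᵀ)⁻¹ v)`.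
This is the conjugation action of the CNOT group `cX = ⟨Λ_{ij}(X)⟩ ≅ GL_n(𝔽₂)`. -/
noncomputable def cxAct (n : ℕ) (g : GL (Fin n) (ZMod 2))
    (p : (Fin n → ZMod 2) × (Fin n → ZMod 2)) :
    (Fin n → ZMod 2) × (Fin n → ZMod 2) :=
  ((g : Matrix (Fin n) (Fin n) (ZMod 2)).mulVec p.1,
   ((g⁻¹ : GL (Fin n) (ZMod 2)) : Matrix (Fin n) (Fin n) (ZMod 2))ᵀ.mulVec p.2)

/-- The orbit of a Pauli `(u,v)` under the conjugation action of the CNOT group. -/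
noncomputable def cxOrbit (n : ℕ) (p : (Fin n → ZMod 2) × (Fin n → ZMod 2)) :
    Set ((Fin n → ZMod 2) × (Fin n → ZMod 2)) :=
  {q | ∃ g : GL (Fin n) (ZMod 2), q = cxAct n g p}


open Matrix

variable {n : ℕ}

abbrev V (n : ℕ) := Fin n → ZMod 2

/-- From a basis, get a GL element whose columns are the basis vectors. -/
noncomputable def glOfBasis (b : Module.Basis (Fin n) (ZMod 2) (V n)) : GL (Fin n) (ZMod 2) :=
  letI := (Pi.basisFun (ZMod 2) (Fin n)).invertibleToMatrix b
  unitOfInvertible ((Pi.basisFun (ZMod 2) (Fin n)).toMatrix b)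

lemma glOfBasis_apply (b : Module.Basis (Fin n) (ZMod 2) (V n)) (i j : Fin n) :
    (glOfBasis b : Matrix (Fin n) (Fin n) (ZMod 2)) i j = b j i := by
  simp [glOfBasis, Module.Basis.toMatrix_apply]

lemma glOfBasis_mulVec_single (b : Module.Basis (Fin n) (ZMod 2) (V n)) (j : Fin n) :
    (glOfBasis b : Matrix (Fin n) (Fin n) (ZMod 2)) *ᵥ Pi.single j 1 = b j := by
  ext i
  simp [mulVec_single, glOfBasis_apply]

lemma glOfBasis_inv_transpose_mulVec (b : Module.Basis (Fin n) (ZMod 2) (V n))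
    (v z : V n) (h : ∀ j, v ⬝ᵥ b j = z j) :
    (((glOfBasis b)⁻¹ : GL (Fin n) (ZMod 2)) : Matrix (Fin n) (Fin n) (ZMod 2))ᵀ *ᵥ z = v := by
  set g := glOfBasis b
  have hz : (g : Matrix (Fin n) (Fin n) (ZMod 2))ᵀ *ᵥ v = z := by
    ext j
    simp only [mulVec, dotProduct, transpose_apply]
    rw [← h j]
    simp [dotProduct, g, glOfBasis_apply, mul_comm]
  rw [← hz, mulVec_mulVec, ← transpose_mul]
  have : (g : Matrix (Fin n) (Fin n) (ZMod 2)) * ((g⁻¹ : GL (Fin n) (ZMod 2)) : Matrix (Fin n) (Fin n) (ZMod 2)) = 1 := by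
    exact_mod_cast g.mul_inv
  rw [this]
  simp

lemma cxAct_def (g : GL (Fin n) (ZMod 2)) (p : V n × V n) :
    cxAct n g p = ((g : Matrix (Fin n) (Fin n) (ZMod 2)) *ᵥ p.1,
      ((g⁻¹ : GL (Fin n) (ZMod 2)) : Matrix (Fin n) (Fin n) (ZMod 2))ᵀ *ᵥ p.2) := rfl

lemma coe_inv_mul (g : GL (Fin n) (ZMod 2)) :
    ((g⁻¹ : GL (Fin n) (ZMod 2)) : Matrix (Fin n) (Fin n) (ZMod 2)) *
      (g : Matrix (Fin n) (Fin n) (ZMod 2)) = 1 := by exact_mod_cast g.inv_mul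

lemma coe_mul_inv (g : GL (Fin n) (ZMod 2)) :
    (g : Matrix (Fin n) (Fin n) (ZMod 2)) *
      ((g⁻¹ : GL (Fin n) (ZMod 2)) : Matrix (Fin n) (Fin n) (ZMod 2)) = 1 := by exact_mod_cast g.mul_inv

lemma cxAct_fst_eq_zero (g : GL (Fin n) (ZMod 2)) (p : V n × V n) :
    (cxAct n g p).1 = 0 ↔ p.1 = 0 := by
  show (g : Matrix (Fin n) (Fin n) (ZMod 2)) *ᵥ p.1 = 0 ↔ _
  constructor
  · intro h
    have := congrArg (((g⁻¹ : GL (Fin n) (ZMod 2)) : Matrix (Fin n) (Fin n) (ZMod 2)) *ᵥ ·) h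
    simp only [mulVec_mulVec, coe_inv_mul, one_mulVec, mulVec_zero] at this
    exact this
  · rintro h; rw [h, mulVec_zero]

lemma cxAct_snd_eq_zero (g : GL (Fin n) (ZMod 2)) (p : V n × V n) :
    (cxAct n g p).2 = 0 ↔ p.2 = 0 := by
  show ((g⁻¹ : GL (Fin n) (ZMod 2)) : Matrix (Fin n) (Fin n) (ZMod 2))ᵀ *ᵥ p.2 = 0 ↔ _
  rw [mulVec_transpose]
  constructor
  · intro h
    have := congrArg (· ᵥ* (g : Matrix (Fin n) (Fin n) (ZMod 2))) h
    simp only [vecMul_vecMul, coe_inv_mul, vecMul_one, zero_vecMul] at this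
    exact this
  · rintro h; rw [h, zero_vecMul]

lemma cxAct_dot (g : GL (Fin n) (ZMod 2)) (p : V n × V n) :
    (cxAct n g p).1 ⬝ᵥ (cxAct n g p).2 = p.1 ⬝ᵥ p.2 := by
  show ((g : Matrix (Fin n) (Fin n) (ZMod 2)) *ᵥ p.1) ⬝ᵥ
    (((g⁻¹ : GL (Fin n) (ZMod 2)) : Matrix (Fin n) (Fin n) (ZMod 2))ᵀ *ᵥ p.2) = _
  rw [dotProduct_comm, mulVec_transpose, dotProduct_mulVec, vecMul_vecMul, coe_inv_mul,
    vecMul_one, dotProduct_comm]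

open Module in
lemma exists_basis_head {K W : Type*} [Field K] [AddCommGroup W] [Module K W]
    [FiniteDimensional K W] {m : ℕ} (hm : finrank K W = m + 1) (x : W) (hx : x ≠ 0) :
    ∃ b : Basis (Fin (m + 1)) K W, b 0 = x := by
  obtain ⟨q, hq⟩ := Submodule.exists_isCompl (K ∙ x)
  have hq1 : finrank K (K ∙ x : Submodule K W) = 1 := finrank_span_singleton hx
  have hqm : finrank K q = m := by
    have := Submodule.finrank_add_eq_of_isCompl hq
    omega
  let d : Basis (Fin m) K q := (Module.finBasis K q).reindex (finCongr hqm)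
  let c : Fin (m + 1) → W := Fin.cons x (fun i => (d i : W))
  have hdli : LinearIndependent K (fun i => (d i : W)) :=
    d.linearIndependent.map' q.subtype q.ker_subtype
  have hxq : x ∉ q := by
    intro hxq
    have : x ∈ (K ∙ x) ⊓ q := ⟨Submodule.mem_span_singleton_self x, hxq⟩
    rw [hq.inf_eq_bot] at this
    exact hx this
  have hli : LinearIndependent K c := by
    rw [linearIndependent_fin_cons]
    refine ⟨hdli, fun hmem => hxq ?_⟩
    have : Submodule.span K (Set.range fun i => (d i : W)) ≤ q := by
      rw [Submodule.span_le]
      rintro _ ⟨i, rfl⟩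
      exact (d i).2
    exact this hmem
  have hcard : Fintype.card (Fin (m + 1)) = finrank K W := by simp [hm]
  refine ⟨basisOfLinearIndependentOfCardEqFinrank hli hcard, ?_⟩
  rw [coe_basisOfLinearIndependentOfCardEqFinrank]
  rfl

noncomputable def dotL (n : ℕ) (v : V n) : V n →ₗ[ZMod 2] ZMod 2 where
  toFun x := v ⬝ᵥ x
  map_add' x y := dotProduct_add v x y
  map_smul' a x := by simp [dotProduct_smul]

open Module in
lemma finrank_ker_dotL {N : ℕ} (v : V (N + 1)) (w : V (N + 1)) (hw : v ⬝ᵥ w = 1) :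
    finrank (ZMod 2) (LinearMap.ker (dotL (N + 1) v)) = N := by
  have hsurj : Function.Surjective (dotL (N + 1) v) := by
    intro a
    refine ⟨a • w, ?_⟩
    show v ⬝ᵥ (a • w) = a
    rw [dotProduct_smul, hw, smul_eq_mul, mul_one]
  have h1 : finrank (ZMod 2) (LinearMap.range (dotL (N + 1) v)) = 1 := by
    rw [LinearMap.range_eq_top.mpr hsurj, finrank_top, finrank_self]
  have h2 := LinearMap.finrank_range_add_finrank_ker (dotL (N + 1) v)
  rw [h1, Module.finrank_pi] at h2
  simp only [Fintype.card_fin] at h2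
  omega

open Module in
lemma basis_cons_ker {N : ℕ} (v : V (N + 1)) (w : V (N + 1)) (hw : v ⬝ᵥ w = 1)
    (d : Basis (Fin N) (ZMod 2) (LinearMap.ker (dotL (N + 1) v))) :
    ∃ b : Basis (Fin (N + 1)) (ZMod 2) (V (N + 1)),
      b 0 = w ∧ (∀ i : Fin N, b i.succ = (d i : V (N + 1))) ∧
      ∀ j, v ⬝ᵥ b j = (Pi.single 0 1 : V (N + 1)) j := by
  let c : Fin (N + 1) → V (N + 1) := Fin.cons w (fun i => (d i : V (N + 1)))
  have hdli : LinearIndependent (ZMod 2) (fun i => (d i : V (N + 1))) :=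
    d.linearIndependent.map' (LinearMap.ker (dotL (N + 1) v)).subtype (LinearMap.ker (dotL (N + 1) v)).ker_subtype
  have hwK : w ∉ LinearMap.ker (dotL (N + 1) v) := by
    intro hmem
    have : v ⬝ᵥ w = 0 := hmem
    rw [hw] at this
    exact one_ne_zero this
  have hli : LinearIndependent (ZMod 2) c := by
    rw [linearIndependent_fin_cons]
    refine ⟨hdli, fun hmem => hwK ?_⟩
    have : Submodule.span (ZMod 2) (Set.range fun i => (d i : V (N + 1))) ≤ LinearMap.ker (dotL (N + 1) v) := by
      rw [Submodule.span_le]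
      rintro _ ⟨i, rfl⟩
      exact (d i).2
    exact this hmem
  have hcard : Fintype.card (Fin (N + 1)) = finrank (ZMod 2) (V (N + 1)) := by
    simp [Module.finrank_pi]
  refine ⟨basisOfLinearIndependentOfCardEqFinrank hli hcard, ?_, ?_, ?_⟩
  · rw [coe_basisOfLinearIndependentOfCardEqFinrank]; rfl
  · intro i; rw [coe_basisOfLinearIndependentOfCardEqFinrank]; simp [c]
  · intro j
    rw [coe_basisOfLinearIndependentOfCardEqFinrank]
    refine Fin.cases ?_ ?_ j
    · simpa [c] using hw
    · intro i
      have : v ⬝ᵥ (d i : V (N + 1)) = 0 := (d i).2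
      simpa [c, Fin.succ_ne_zero] using this

lemma zmod2_cases : ∀ x : ZMod 2, x = 0 ∨ x = 1 := by decide

lemma exists_coord_one {m : ℕ} {v : V m} (hv : v ≠ 0) : ∃ k, v k = 1 := by
  by_contra h
  push_neg at h
  apply hv
  ext k
  rcases zmod2_cases (v k) with h0 | h1
  · simp [h0]
  · exact absurd h1 (h k)

lemma single_ne_zero' {m : ℕ} (j : Fin m) : (Pi.single j 1 : V m) ≠ 0 := by
  intro h
  have := congrFun h j
  simp at this

lemma orbit_I (m : ℕ) : cxOrbit m (0, 0) = {(0, 0)} := by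
  ext p
  constructor
  · rintro ⟨g, rfl⟩
    simp [cxAct, Set.mem_singleton_iff, Prod.ext_iff, mulVec_zero]
  · rintro rfl
    exact ⟨1, by simp [cxAct, Prod.ext_iff]⟩

open Module in
lemma orbit_X (N : ℕ) :
    cxOrbit (N + 1) (Pi.single 0 1, 0) = {p | p.1 ≠ 0 ∧ p.2 = 0} := by
  ext p
  constructor
  · rintro ⟨g, rfl⟩
    refine ⟨?_, (cxAct_snd_eq_zero g _).mpr rfl⟩
    rw [Ne, cxAct_fst_eq_zero]
    exact single_ne_zero' 0
  · rintro ⟨h1, h2⟩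
    have hm : finrank (ZMod 2) (V (N + 1)) = N + 1 := by simp [Module.finrank_pi]
    obtain ⟨b, hb0⟩ := exists_basis_head hm p.1 h1
    refine ⟨glOfBasis b, ?_⟩
    have : p = (p.1, p.2) := rfl
    rw [this, h2, cxAct_def, Prod.mk.injEq]
    constructor
    · rw [glOfBasis_mulVec_single, hb0]
    · rw [mulVec_zero]

open Module in
lemma orbit_Z (N : ℕ) :
    cxOrbit (N + 1) (0, Pi.single 0 1) = {p | p.1 = 0 ∧ p.2 ≠ 0} := by
  ext p
  constructor
  · rintro ⟨g, rfl⟩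
    refine ⟨(cxAct_fst_eq_zero g _).mpr rfl, ?_⟩
    rw [Ne, cxAct_snd_eq_zero]
    exact single_ne_zero' 0
  · rintro ⟨h1, h2⟩
    obtain ⟨k, hk⟩ := exists_coord_one h2
    have hw : p.2 ⬝ᵥ (Pi.single k 1 : V (N + 1)) = 1 := by
      rw [dotProduct_single, hk, one_mul]
    obtain ⟨b, hb0, hbs, hdual⟩ := basis_cons_ker p.2 _ hw
      ((Module.finBasis (ZMod 2) _).reindex (finCongr (finrank_ker_dotL p.2 _ hw)))
    refine ⟨glOfBasis b, ?_⟩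
    have : p = (p.1, p.2) := rfl
    rw [this, h1, cxAct_def, Prod.mk.injEq]
    constructor
    · rw [mulVec_zero]
    · rw [glOfBasis_inv_transpose_mulVec b p.2 _ hdual]

lemma orbit_Y (N : ℕ) :
    cxOrbit (N + 1) (Pi.single 0 1, Pi.single 0 1) = {p | p.1 ⬝ᵥ p.2 = 1} := by
  ext p
  constructor
  · rintro ⟨g, rfl⟩
    show (cxAct _ g _).1 ⬝ᵥ (cxAct _ g _).2 = 1
    rw [cxAct_dot]
    simp [dotProduct_single]
  · rintro hdot
    have hw : p.2 ⬝ᵥ p.1 = 1 := by rwa [dotProduct_comm]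
    obtain ⟨b, hb0, hbs, hdual⟩ := basis_cons_ker p.2 p.1 hw
      ((Module.finBasis (ZMod 2) _).reindex (finCongr (finrank_ker_dotL p.2 _ hw)))
    refine ⟨glOfBasis b, ?_⟩
    have : p = (p.1, p.2) := rfl
    rw [this, cxAct_def, Prod.mk.injEq]
    constructor
    · rw [glOfBasis_mulVec_single, hb0]
    · rw [glOfBasis_inv_transpose_mulVec b p.2 _ hdual]

lemma cxAct_mul (g h : GL (Fin n) (ZMod 2)) (p : V n × V n) :
    cxAct n (g * h) p = cxAct n g (cxAct n h p) := by
  rw [cxAct_def, cxAct_def, cxAct_def]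
  refine Prod.ext ?_ ?_
  · show (((g * h : GL (Fin n) (ZMod 2)) : Matrix (Fin n) (Fin n) (ZMod 2))) *ᵥ p.1 = _
    rw [Units.val_mul, ← mulVec_mulVec]
  · show ((((g * h)⁻¹ : GL (Fin n) (ZMod 2)) : Matrix (Fin n) (Fin n) (ZMod 2)))ᵀ *ᵥ p.2 = _
    rw [_root_.mul_inv_rev, Units.val_mul, transpose_mul, ← mulVec_mulVec]

/-- The transvection `1 + E₀₁` as a unit (self-inverse in char 2). -/
noncomputable def tUnit (N : ℕ) : GL (Fin (N + 2)) (ZMod 2) :=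
  ⟨transvection 0 1 1, transvection 0 1 1,
    by rw [transvection_mul_transvection_same 0 1 (by simp) (1:ZMod 2) 1,
      show (1:ZMod 2)+1 = 0 from by decide, transvection_zero],
    by rw [transvection_mul_transvection_same 0 1 (by simp) (1:ZMod 2) 1,
      show (1:ZMod 2)+1 = 0 from by decide, transvection_zero]⟩

lemma tUnit_act (N : ℕ) :
    cxAct (N + 2) (tUnit N) (Pi.single 0 1 + Pi.single 1 1, Pi.single 0 1 + Pi.single 1 1)
      = (Pi.single 1 1, Pi.single 0 1) := by
  have h01 : (0 : Fin (N + 2)) ≠ 1 := by simp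
  rw [cxAct_def, Prod.mk.injEq]
  constructor
  · show (transvection 0 1 1) *ᵥ _ = _
    rw [transvection, add_mulVec, one_mulVec, single_mulVec]
    ext i
    rcases eq_or_ne i 0 with rfl | hi0
    · simp [Pi.single_apply, h01, Function.update_apply, show (1:ZMod 2)+1 = 0 from by decide]
    · rcases eq_or_ne i 1 with rfl | hi1
      · simp [Pi.single_apply, h01.symm, Function.update_apply, show (1:ZMod 2)+1 = 0 from by decide]
      · simp [Pi.single_apply, hi0, hi1, Function.update_apply]
  · show (transvection 0 1 1)ᵀ *ᵥ _ = _
    rw [transvection, transpose_add, transpose_one, add_mulVec, one_mulVec]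
    rw [show (Matrix.single (0 : Fin (N+2)) (1 : Fin (N+2)) (1 : ZMod 2))ᵀ
        = Matrix.single (1 : Fin (N+2)) (0 : Fin (N+2)) (1 : ZMod 2) from by
      ext a b; simp [Matrix.single, and_comm]]
    rw [single_mulVec]
    ext i
    rcases eq_or_ne i 0 with rfl | hi0
    · simp [Pi.single_apply, h01, Function.update_apply, show (1:ZMod 2)+1 = 0 from by decide]
    · rcases eq_or_ne i 1 with rfl | hi1
      · simp [Pi.single_apply, h01.symm, Function.update_apply, show (1:ZMod 2)+1 = 0 from by decide]
      · simp [Pi.single_apply, hi0, hi1, Function.update_apply]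

open Module in
lemma orbit_YY (N : ℕ) :
    cxOrbit (N + 2) (Pi.single 0 1 + Pi.single 1 1, Pi.single 0 1 + Pi.single 1 1)
      = {p | p.1 ≠ 0 ∧ p.2 ≠ 0 ∧ p.1 ⬝ᵥ p.2 = 0} := by
  have h01 : ((0 : Fin (N+2)) : Fin (N+2)) ≠ 1 := by simp
  have hne : (Pi.single 0 1 + Pi.single 1 1 : V (N + 2)) ≠ 0 := by
    intro h
    have := congrFun h 0
    simp [Pi.single_apply, h01] at this
  have hdot0 : (Pi.single 0 1 + Pi.single 1 1 : V (N+2)) ⬝ᵥ (Pi.single 0 1 + Pi.single 1 1) = 0 := by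
    rw [dotProduct_add, add_dotProduct, add_dotProduct]
    rw [dotProduct_single, dotProduct_single, single_dotProduct, single_dotProduct]
    simp [Pi.single_apply, h01, h01.symm]
    decide
  ext p
  constructor
  · rintro ⟨g, rfl⟩
    refine ⟨?_, ?_, ?_⟩
    · rw [Ne, cxAct_fst_eq_zero]; exact hne
    · rw [Ne, cxAct_snd_eq_zero]; exact hne
    · show (cxAct _ g _).1 ⬝ᵥ (cxAct _ g _).2 = 0
      rw [cxAct_dot]; exact hdot0
  · rintro ⟨h1, h2, h3⟩
    obtain ⟨k, hk⟩ := exists_coord_one h2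
    have hw : p.2 ⬝ᵥ (Pi.single k 1 : V (N + 2)) = 1 := by
      rw [dotProduct_single, hk, one_mul]
    have huker : p.1 ∈ LinearMap.ker (dotL (N + 2) p.2) := by
      show p.2 ⬝ᵥ p.1 = 0
      rwa [dotProduct_comm]
    have hkerrank : finrank (ZMod 2) (LinearMap.ker (dotL (N + 2) p.2)) = N + 1 :=
      finrank_ker_dotL p.2 _ hw
    have hune : (⟨p.1, huker⟩ : LinearMap.ker (dotL (N + 2) p.2)) ≠ 0 := by
      intro h
      exact h1 (congrArg Subtype.val h)
    obtain ⟨d, hd0⟩ := exists_basis_head hkerrank _ hune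
    obtain ⟨b, hb0, hbs, hdual⟩ := basis_cons_ker p.2 _ hw d
    refine ⟨glOfBasis b * tUnit N, ?_⟩
    rw [cxAct_mul, tUnit_act, cxAct_def, Prod.mk.injEq]
    have hb1 : b 1 = p.1 := by
      have := hbs 0
      rw [Fin.succ_zero_eq_one] at this
      rw [this, hd0]
    exact ⟨by rw [show ((Pi.single 1 1, Pi.single 0 1) : V (N+2) × V (N+2)).1 = Pi.single 1 1 from rfl,
        glOfBasis_mulVec_single, hb1],
      by rw [show ((Pi.single 1 1, Pi.single 0 1) : V (N+2) × V (N+2)).2 = Pi.single 0 1 from rfl,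
        glOfBasis_inv_transpose_mulVec b p.2 _ hdual]⟩

open Finset in
lemma ncard_setOf_prod {α β : Type*} [Fintype α] [Fintype β] [DecidableEq α] [DecidableEq β]
    (P : α → β → Prop) [∀ a, DecidablePred (P a)] [DecidablePred (fun p : α × β => P p.1 p.2)] :
    Set.ncard {p : α × β | P p.1 p.2} = ∑ a : α, (univ.filter (P a)).card := by
  rw [Set.ncard_eq_toFinset_card', Set.toFinset_setOf]
  rw [Finset.card_eq_sum_card_fiberwise (f := Prod.fst) (t := univ) (fun x _ => mem_univ _)]
  refine Finset.sum_congr rfl fun a _ => ?_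
  refine Finset.card_bij (fun p _ => p.2) ?_ ?_ ?_
  · rintro ⟨x, y⟩ hp
    simp only [mem_filter, mem_univ, true_and] at hp ⊢
    obtain ⟨h1, h2⟩ := hp
    subst h2
    exact h1
  · rintro ⟨x, y⟩ hp ⟨x', y'⟩ hp' h
    simp only [mem_filter] at hp hp'
    obtain ⟨⟨_, h1⟩, h2⟩ := And.intro hp hp'
    cases hp.2
    cases hp'.2
    cases h
    rfl
  · intro b hb
    simp only [mem_filter, mem_univ, true_and] at hb
    exact ⟨(a, b), by simp [hb], rfl⟩

open Finset in
lemma card_filter_dot {m : ℕ} (u : V m) (hu : u ≠ 0) (c : ZMod 2) :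
    (univ.filter (fun v : V m => u ⬝ᵥ v = c)).card = 2 ^ (m - 1) := by
  classical
  obtain ⟨k, hk⟩ := exists_coord_one hu
  have hm : 1 ≤ m := Nat.pos_of_ne_zero (by rintro rfl; exact absurd (Subsingleton.elim u 0) hu)
  have hbij : (univ.filter (fun v : V m => u ⬝ᵥ v = 0)).card
      = (univ.filter (fun v : V m => u ⬝ᵥ v = 1)).card := by
    refine Finset.card_bij' (fun v _ => v + Pi.single k 1) (fun v _ => v + Pi.single k 1)
      ?_ ?_ ?_ ?_
    · intro v hv
      simp only [mem_filter, mem_univ, true_and] at hv ⊢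
      rw [dotProduct_add, hv, dotProduct_single, hk, zero_add, one_mul]
    · intro v hv
      simp only [mem_filter, mem_univ, true_and] at hv ⊢
      rw [dotProduct_add, hv, dotProduct_single, hk, one_mul]
      decide
    · intro v _
      ext i
      simp [Pi.single_apply]
      split <;> [skip; simp]
      rw [add_assoc, show (1:ZMod 2)+1 = 0 from by decide, add_zero]
    · intro v _
      ext i
      simp [Pi.single_apply]
      split <;> [skip; simp]
      rw [add_assoc, show (1:ZMod 2)+1 = 0 from by decide, add_zero]
  have hsplit : (univ.filter (fun v : V m => u ⬝ᵥ v = 1)).card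
      + (univ.filter (fun v : V m => u ⬝ᵥ v = 0)).card = 2 ^ m := by
    have h0 : (univ.filter (fun v : V m => u ⬝ᵥ v = 0))
        = (univ.filter (fun v : V m => ¬ u ⬝ᵥ v = 1)) := by
      refine Finset.filter_congr fun v _ => ?_
      rcases zmod2_cases (u ⬝ᵥ v) with h | h <;> simp [h]
    rw [h0, Finset.card_filter_add_card_filter_not (p := fun v : V m => u ⬝ᵥ v = 1)]
    simp [Fintype.card_fun]
  have h2m : 2 ^ m = 2 * 2 ^ (m - 1) := by
    conv_lhs => rw [show m = 1 + (m - 1) from by omega]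
    rw [pow_add, pow_one]
  rcases zmod2_cases c with rfl | rfl
  · omega
  · omega

open Finset in
lemma sum_ite_zero_card {m : ℕ} (c : ℕ) :
    ∑ a : V m, (if a = 0 then 0 else c) = (2 ^ m - 1) * c := by
  rw [Finset.sum_ite, Finset.sum_const, Finset.sum_const, smul_eq_mul, smul_eq_mul, mul_zero,
    zero_add]
  congr 1
  have h1 : (univ.filter (fun a : V m => ¬ a = 0)) = univ.erase 0 := by
    ext a; simp
  rw [h1, Finset.card_erase_of_mem (mem_univ _)]
  simp [Fintype.card_fun]

open Finset in
lemma ncard_X {m : ℕ} :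
    Set.ncard {p : V m × V m | p.1 ≠ 0 ∧ p.2 = 0} = 2 ^ m - 1 := by
  rw [ncard_setOf_prod (fun u v => u ≠ 0 ∧ v = 0)]
  have h : ∀ a : V m, (univ.filter (fun v : V m => a ≠ 0 ∧ v = 0)).card
      = if a = 0 then 0 else 1 := by
    intro a
    rcases eq_or_ne a 0 with rfl | ha
    · simp
    · rw [if_neg ha]
      have : (univ.filter (fun v : V m => a ≠ 0 ∧ v = 0)) = {0} := by
        ext v; simp [ha]
      rw [this, Finset.card_singleton]
  rw [Finset.sum_congr rfl (fun a _ => h a), sum_ite_zero_card, mul_one]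

open Finset in
lemma ncard_Z {m : ℕ} :
    Set.ncard {p : V m × V m | p.1 = 0 ∧ p.2 ≠ 0} = 2 ^ m - 1 := by
  rw [ncard_setOf_prod (fun u v => u = 0 ∧ v ≠ 0)]
  have h : ∀ a : V m, (univ.filter (fun v : V m => a = 0 ∧ v ≠ 0)).card
      = if a = 0 then 2 ^ m - 1 else 0 := by
    intro a
    rcases eq_or_ne a 0 with rfl | ha
    · rw [if_pos rfl]
      have : (univ.filter (fun v : V m => (0 : V m) = 0 ∧ v ≠ 0)) = univ.erase 0 := by
        ext v; simp
      rw [this, Finset.card_erase_of_mem (mem_univ _)]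
      simp [Fintype.card_fun]
    · simp [ha]
  rw [Finset.sum_congr rfl (fun a _ => h a)]
  simp

open Finset in
lemma ncard_Y {m : ℕ} :
    Set.ncard {p : V m × V m | p.1 ⬝ᵥ p.2 = 1} = 2 ^ (m - 1) * (2 ^ m - 1) := by
  rw [ncard_setOf_prod (fun u v => u ⬝ᵥ v = 1)]
  have h : ∀ a : V m, (univ.filter (fun v : V m => a ⬝ᵥ v = 1)).card
      = if a = 0 then 0 else 2 ^ (m - 1) := by
    intro a
    rcases eq_or_ne a 0 with rfl | ha
    · rw [if_pos rfl]
      have : (univ.filter (fun v : V m => (0 : V m) ⬝ᵥ v = 1)) = ∅ := by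
        ext v; simp [zero_dotProduct]
      rw [this, Finset.card_empty]
    · rw [if_neg ha, card_filter_dot a ha]
  rw [Finset.sum_congr rfl (fun a _ => h a), sum_ite_zero_card, mul_comm]

open Finset in
lemma ncard_YY {m : ℕ} (hm : 2 ≤ m) :
    Set.ncard {p : V m × V m | p.1 ≠ 0 ∧ p.2 ≠ 0 ∧ p.1 ⬝ᵥ p.2 = 0}
      = 4 ^ m / 2 - 3 * 2 ^ (m - 1) + 1 := by
  rw [ncard_setOf_prod (fun u v => u ≠ 0 ∧ v ≠ 0 ∧ u ⬝ᵥ v = 0)]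
  have h : ∀ a : V m, (univ.filter (fun v : V m => a ≠ 0 ∧ v ≠ 0 ∧ a ⬝ᵥ v = 0)).card
      = if a = 0 then 0 else 2 ^ (m - 1) - 1 := by
    intro a
    rcases eq_or_ne a 0 with rfl | ha
    · simp
    · rw [if_neg ha]
      have h1 : (univ.filter (fun v : V m => a ≠ 0 ∧ v ≠ 0 ∧ a ⬝ᵥ v = 0))
          = (univ.filter (fun v : V m => a ⬝ᵥ v = 0)).erase 0 := by
        ext v
        simp [Finset.mem_erase, ha, and_comm]
      rw [h1, Finset.card_erase_of_mem (by simp [dotProduct_zero]), card_filter_dot a ha]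
  rw [Finset.sum_congr rfl (fun a _ => h a), sum_ite_zero_card]
  -- arithmetic
  have ht : 2 ≤ 2 ^ (m - 1) := by
    calc 2 = 2 ^ 1 := rfl
    _ ≤ 2 ^ (m - 1) := Nat.pow_le_pow_right (by norm_num) (by omega)
  set t := 2 ^ (m - 1) with htdef
  have h2m : 2 ^ m = 2 * t := by
    rw [htdef]
    conv_lhs => rw [show m = 1 + (m - 1) from by omega]
    rw [pow_add, pow_one]
  have h4m : 4 ^ m = 2 * (2 * t * t) := by
    have : (4 : ℕ) ^ m = 2 ^ m * 2 ^ m := by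
      rw [← Nat.mul_pow]
    rw [this, h2m]; ring
  rw [h2m, h4m, Nat.mul_div_cancel_left _ (by norm_num : 0 < 2)]
  have h3t : 3 * t ≤ 2 * t * t := by nlinarith
  zify [show 1 ≤ 2 * t from by omega, show 1 ≤ t from by omega, h3t]
  ring

lemma orbit_X2 (N : ℕ) :
    cxOrbit (N + 2) (Pi.single 0 1, 0) = {p : V (N+2) × V (N+2) | p.1 ≠ 0 ∧ p.2 = 0} :=
  orbit_X (N + 1)

lemma orbit_Z2 (N : ℕ) :
    cxOrbit (N + 2) (0, Pi.single 0 1) = {p : V (N+2) × V (N+2) | p.1 = 0 ∧ p.2 ≠ 0} :=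
  orbit_Z (N + 1)

lemma orbit_Y2 (N : ℕ) :
    cxOrbit (N + 2) (Pi.single 0 1, Pi.single 0 1) = {p : V (N+2) × V (N+2) | p.1 ⬝ᵥ p.2 = 1} :=
  orbit_Y (N + 1)

lemma cx_orbits' (n' : ℕ) :
    (∀ p : V (n' + 2) × V (n' + 2),
        ∃ r ∈ [((0 : V (n' + 2)), (0 : V (n' + 2))), (Pi.single 0 1, 0), (0, Pi.single 0 1),
          (Pi.single 0 1, Pi.single 0 1),
          (Pi.single 0 1 + Pi.single 1 1, Pi.single 0 1 + Pi.single 1 1)],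
          p ∈ cxOrbit (n' + 2) r) ∧
    (([((0 : V (n' + 2)), (0 : V (n' + 2))), (Pi.single 0 1, 0), (0, Pi.single 0 1),
          (Pi.single 0 1, Pi.single 0 1),
          (Pi.single 0 1 + Pi.single 1 1, Pi.single 0 1 + Pi.single 1 1)].map
        (cxOrbit (n' + 2))).Pairwise Disjoint) ∧
    (cxOrbit (n' + 2) (0, 0)).ncard = 1 ∧
    (cxOrbit (n' + 2) (Pi.single 0 1, 0)).ncard = 2 ^ (n' + 2) - 1 ∧
    (cxOrbit (n' + 2) (0, Pi.single 0 1)).ncard = 2 ^ (n' + 2) - 1 ∧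
    (cxOrbit (n' + 2) (Pi.single 0 1, Pi.single 0 1)).ncard
      = 2 ^ (n' + 2 - 1) * (2 ^ (n' + 2) - 1) ∧
    (cxOrbit (n' + 2) (Pi.single 0 1 + Pi.single 1 1, Pi.single 0 1 + Pi.single 1 1)).ncard
      = 4 ^ (n' + 2) / 2 - 3 * 2 ^ (n' + 2 - 1) + 1 := by
  refine ⟨?_, ?_, ?_, ?_, ?_, ?_, ?_⟩
  · -- coverage
    intro p
    by_cases h1 : p.1 = 0 <;> by_cases h2 : p.2 = 0
    · exact ⟨(0, 0), by simp, by rw [orbit_I]; exact Prod.ext h1 h2⟩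
    · exact ⟨(0, Pi.single 0 1), by simp, by rw [orbit_Z2]; exact ⟨h1, h2⟩⟩
    · exact ⟨(Pi.single 0 1, 0), by simp, by rw [orbit_X2]; exact ⟨h1, h2⟩⟩
    · rcases zmod2_cases (p.1 ⬝ᵥ p.2) with hd | hd
      · exact ⟨(Pi.single 0 1 + Pi.single 1 1, Pi.single 0 1 + Pi.single 1 1), by simp,
          by rw [orbit_YY]; exact ⟨h1, h2, hd⟩⟩
      · exact ⟨(Pi.single 0 1, Pi.single 0 1), by simp, by rw [orbit_Y2]; exact hd⟩
  · -- pairwise disjoint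
    simp only [List.map_cons, List.map_nil]
    rw [orbit_I, orbit_X2, orbit_Z2, orbit_Y2, orbit_YY]
    have hd10 : (1 : ZMod 2) ≠ 0 := by decide
    refine List.Pairwise.cons ?_ (List.Pairwise.cons ?_ (List.Pairwise.cons ?_
      (List.Pairwise.cons ?_ (List.pairwise_singleton _ _))))
    · intro s hs
      simp only [List.mem_cons, List.not_mem_nil, or_false] at hs
      rw [Set.disjoint_left]
      rintro p rfl h
      rcases hs with rfl | rfl | rfl | rfl
      · exact h.1 rfl
      · exact h.2 rfl
      · rw [Set.mem_setOf_eq] at h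
        rw [show ((0, 0) : V (n'+2) × V (n'+2)).1 = 0 from rfl] at h
        rw [zero_dotProduct] at h
        exact hd10 h.symm
      · exact h.1 rfl
    · intro s hs
      simp only [List.mem_cons, List.not_mem_nil, or_false] at hs
      rw [Set.disjoint_left]
      rintro p hp h
      rcases hs with rfl | rfl | rfl
      · exact h.2 hp.2
      · rw [Set.mem_setOf_eq, hp.2, dotProduct_zero] at h
        exact hd10 h.symm
      · exact h.2.1 hp.2
    · intro s hs
      simp only [List.mem_cons, List.not_mem_nil, or_false] at hs
      rw [Set.disjoint_left]
      rintro p hp h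
      rcases hs with rfl | rfl
      · rw [Set.mem_setOf_eq, hp.1, zero_dotProduct] at h
        exact hd10 h.symm
      · exact h.1 hp.1
    · intro s hs
      simp only [List.mem_cons, List.not_mem_nil, or_false] at hs
      rw [Set.disjoint_left]
      rintro p hp h
      rcases hs with rfl
      rw [Set.mem_setOf_eq] at hp h
      rw [hp] at h
      exact hd10 h.2.2
  · rw [orbit_I, Set.ncard_singleton]
  · rw [orbit_X2, ncard_X]
  · rw [orbit_Z2, ncard_Z]
  · rw [orbit_Y2, ncard_Y]
  · rw [orbit_YY, ncard_YY (by omega)]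


/-- Under the conjugation action of the `n`-qubit CNOT group on the Pauli group
mod phases (`n ≥ 2`, written `n+2`), there are exactly 5 orbits, with
representatives `I = (0,0)`, `X(1) = (e₁,0)`, `Z(1) = (0,e₁)`, `Y(1) = (e₁,e₁)`,
`Y(1)Y(2) = (e₁+e₂, e₁+e₂)`, of sizes `1`, `2ⁿ−1`, `2ⁿ−1`, `2^{n−1}(2ⁿ−1)`, and
`4ⁿ/2 − 3·2^{n−1} + 1` respectively. -/
theorem cx_orbits (n' : ℕ) :
    let n := n' + 2
    let e₁ : Fin n → ZMod 2 := Pi.single 0 1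
    let e₂ : Fin n → ZMod 2 := Pi.single 1 1
    let reps : List ((Fin n → ZMod 2) × (Fin n → ZMod 2)) :=
      [(0, 0), (e₁, 0), (0, e₁), (e₁, e₁), (e₁ + e₂, e₁ + e₂)]
    -- every Pauli lies in one of the five orbits
    (∀ p : (Fin n → ZMod 2) × (Fin n → ZMod 2),
        ∃ r ∈ reps, p ∈ cxOrbit n r) ∧
    -- the five orbits are pairwise disjoint (so there are exactly 5 orbits)
    (reps.map (cxOrbit n)).Pairwise Disjoint ∧
    -- orbit sizes
    (cxOrbit n (0, 0)).ncard = 1 ∧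
    (cxOrbit n (e₁, 0)).ncard = 2 ^ n - 1 ∧
    (cxOrbit n (0, e₁)).ncard = 2 ^ n - 1 ∧
    (cxOrbit n (e₁, e₁)).ncard = 2 ^ (n - 1) * (2 ^ n - 1) ∧
    (cxOrbit n (e₁ + e₂, e₁ + e₂)).ncard = 4 ^ n / 2 - 3 * 2 ^ (n - 1) + 1 := by
  intro n e₁ e₂ reps
  exact cx_orbits' n'
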